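/- A finite poset P contains an X-shaped subposet (five distinct elements a,b,c,d,e with a < c, b < c, c < d, c < e, where a,b are incomparable and d,e are incomparable) if and only if there exists an element v ∈ P with uc(v) ≥ 2 and dc(v) ≥ 2, where uc(v) and dc(v) are the numbers of saturated chains from v up to a maximal element and down to a minimal element of P. -/

import Mathlib

open Classical

variable {α : Type*}

/-- A saturated chain from `v` up to a maximal element: a list `v = v₀ ⋖ v₁ ⋖ … ⋖ vₖ`
with `vₖ` maximal. -/
def UpChain [PartialOrder α] (v : α) (l : List α) : Prop :=
  l.Chain' (· ⋖ ·) ∧ l.head? = some v ∧ ∃ m, l.getLast? = some m ∧ IsMax m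

/-- A saturated chain from a minimal element up to `v`. -/
def DownChain [PartialOrder α] (v : α) (l : List α) : Prop :=
  l.Chain' (· ⋖ ·) ∧ (∃ m, l.head? = some m ∧ IsMin m) ∧ l.getLast? = some v

/-- `uc v` : the number of saturated chains from `v` up to a maximal element. -/
noncomputable def uc [PartialOrder α] (v : α) : ℕ := Nat.card {l : List α // UpChain v l}

/-- `dc v` : the number of saturated chains from `v` down to a minimal element. -/
noncomputable def dc [PartialOrder α] (v : α) : ℕ := Nat.card {l : List α // DownChain v l}

/-- A maximal chain: a saturated chain from a minimal element to a maximal element. -/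
def IsMaxChainList [PartialOrder α] (l : List α) : Prop :=
  l.Chain' (· ⋖ ·) ∧ (∃ m, l.head? = some m ∧ IsMin m) ∧ ∃ m, l.getLast? = some m ∧ IsMax m

/-- `c(P)`: the number of maximal chains. -/
noncomputable def numMaxChains (α : Type*) [PartialOrder α] : ℕ :=
  Nat.card {l : List α // IsMaxChainList l}

/-- `max(P)`: the number of maximal elements. -/
noncomputable def numMax (α : Type*) [PartialOrder α] : ℕ := Nat.card {v : α // IsMax v}

/-- `min(P)`: the number of minimal elements. -/
noncomputable def numMin (α : Type*) [PartialOrder α] : ℕ := Nat.card {v : α // IsMin v}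

/-- `edges(P)`: the number of cover relations (edges of the Hasse diagram). -/
noncomputable def numEdges (α : Type*) [PartialOrder α] : ℕ :=
  Nat.card {p : α × α // p.1 ⋖ p.2}

/-- `gap(P) = c(P) + |P| - (max(P) + min(P) + edges(P))`. -/
noncomputable def gap (α : Type*) [PartialOrder α] : ℤ :=
  (numMaxChains α : ℤ) + Nat.card α - ((numMax α : ℤ) + numMin α + numEdges α)

/-- The crossing number `(uc(v)-1)(dc(v)-1)` of `v`. -/
noncomputable def crossingNumber [PartialOrder α] (v : α) : ℕ := (uc v - 1) * (dc v - 1)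

/-- `c` is the center of an X-shaped subposet: there are `a, b < c < d, e`
with `a ∥ b` and `d ∥ e`. -/
def IsXCenter [PartialOrder α] (c : α) : Prop :=
  ∃ a b d e : α, a < c ∧ b < c ∧ c < d ∧ c < e ∧
    ¬ a ≤ b ∧ ¬ b ≤ a ∧ ¬ d ≤ e ∧ ¬ e ≤ d

/-- `P` contains an X-shaped subposet. -/
def HasX (α : Type*) [PartialOrder α] : Prop := ∃ c : α, IsXCenter c



section Aux

variable {α : Type*} [Fintype α] [PartialOrder α]

lemma exists_cov_le {a b : α} (h : a < b) : ∃ x, a ⋖ x ∧ x ≤ b := by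
  haveI : LocallyFiniteOrder α := Fintype.toLocallyFiniteOrder
  exact exists_covBy_le_of_lt h

lemma upChain_cons {v w : α} {l : List α} (hvw : v ⋖ w) (h : UpChain w l) :
    UpChain v (v :: l) := by
  obtain ⟨hc, hh, m, hm, hmax⟩ := h
  cases l with
  | nil => simp at hh
  | cons a t =>
    have haw : a = w := by simpa using hh
    subst haw
    refine ⟨List.isChain_cons_cons.2 ⟨hvw, hc⟩, rfl, m, ?_, hmax⟩
    simpa [List.getLast?_cons_cons] using hm

lemma exists_upChain_mem (v : α) : ∀ d, v ≤ d → ∃ l, UpChain v l ∧ d ∈ l := by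
  refine WellFounded.induction (C := fun v => ∀ d, v ≤ d → ∃ l, UpChain v l ∧ d ∈ l)
    (wellFounded_gt (α := α)) v ?_
  clear v
  intro v IH d hvd
  by_cases hmax : IsMax v
  · have hvd' : v = d := le_antisymm hvd (hmax hvd)
    subst hvd'
    exact ⟨[v], ⟨List.isChain_singleton v, rfl, v, rfl, hmax⟩, List.mem_singleton_self v⟩
  · rcases eq_or_lt_of_le hvd with rfl | hlt
    · obtain ⟨w, hw⟩ := not_isMax_iff.mp hmax
      obtain ⟨u, huc, -⟩ := exists_cov_le hw
      obtain ⟨l, hl, -⟩ := IH u huc.lt u le_rfl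
      exact ⟨v :: l, upChain_cons huc hl, List.mem_cons_self⟩
    · obtain ⟨u, huc, hud⟩ := exists_cov_le hlt
      obtain ⟨l, hl, hdl⟩ := IH u huc.lt d hud
      exact ⟨v :: l, upChain_cons huc hl, List.mem_cons_of_mem _ hdl⟩

lemma UpChain.pairwise_lt {v : α} {l : List α} (h : UpChain v l) :
    l.Pairwise (· < ·) :=
  List.isChain_iff_pairwise.mp (h.1.imp fun a b h' => h'.lt)

lemma finite_upChain (v : α) : Finite {l : List α // UpChain v l} := by
  have hsub : {l : List α | UpChain v l} ⊆ {l : List α | l.length ≤ Fintype.card α} := by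
    intro l hl
    have hnd : l.Nodup := hl.pairwise_lt.imp ne_of_lt
    exact hnd.length_le_card
  exact ((List.finite_length_le α (Fintype.card α)).subset hsub).to_subtype

lemma two_le_uc {v d e : α} (hd : v < d) (he : v < e) (hde : ¬ d ≤ e) (hed : ¬ e ≤ d) :
    2 ≤ uc v := by
  obtain ⟨l1, h1, hd1⟩ := exists_upChain_mem v d hd.le
  obtain ⟨l2, h2, he2⟩ := exists_upChain_mem v e he.le
  have hne : l1 ≠ l2 := by
    rintro rfl
    have hp : l1.Pairwise (fun a b => a < b ∨ b < a) := h1.pairwise_lt.imp Or.inl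
    have := (haveI : Std.Symm (fun a b : α => a < b ∨ b < a) := ⟨fun a b h => h.symm⟩; hp.forall hd1 he2 (fun h => hde h.le))
    rcases this with h | h
    · exact hde h.le
    · exact hed h.le
  haveI := finite_upChain v
  have : Nontrivial {l : List α // UpChain v l} :=
    ⟨⟨l1, h1⟩, ⟨l2, h2⟩, fun h => hne (congrArg Subtype.val h)⟩
  exact Finite.one_lt_card_iff_nontrivial.mpr this

lemma upChain_diverge : ∀ (l1 : List α) (v : α) (l2 : List α), UpChain v l1 → UpChain v l2 →
    l1 ≠ l2 → ∃ x y, v < x ∧ v < y ∧ ¬ x ≤ y ∧ ¬ y ≤ x := by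
  intro l1
  induction l1 with
  | nil => intro v l2 h1 _ _; simp [UpChain] at h1
  | cons a t1 IH =>
    intro v l2 h1 h2 hne
    have hav : a = v := by simpa using h1.2.1
    subst a
    cases l2 with
    | nil => simp [UpChain] at h2
    | cons b t2 =>
      have hbv : b = v := by simpa using h2.2.1
      subst b
      cases t1 with
      | nil =>
        obtain ⟨-, -, m, hm, hmax⟩ := h1
        have hma : v = m := by simpa using hm
        rw [← hma] at hmax
        cases t2 with
        | nil => exact absurd rfl hne
        | cons c t2' =>
          have hac : v ⋖ c := (List.isChain_cons_cons.mp h2.1).1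
          exact absurd (hmax hac.lt.le) (not_le_of_gt hac.lt)
      | cons x t1' =>
        cases t2 with
        | nil =>
          obtain ⟨-, -, m, hm, hmax⟩ := h2
          have hma : v = m := by simpa using hm
          rw [← hma] at hmax
          have hax : v ⋖ x := (List.isChain_cons_cons.mp h1.1).1
          exact absurd (hmax hax.lt.le) (not_le_of_gt hax.lt)
        | cons y t2' =>
          have hax : v ⋖ x := (List.isChain_cons_cons.mp h1.1).1
          have hay : v ⋖ y := (List.isChain_cons_cons.mp h2.1).1
          by_cases hxy : x = y
          · subst hxy
            have ht1 : UpChain x (x :: t1') := by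
              refine ⟨(List.isChain_cons_cons.mp h1.1).2, rfl, ?_⟩
              obtain ⟨-, -, m, hm, hmax⟩ := h1
              exact ⟨m, by simpa [List.getLast?_cons_cons] using hm, hmax⟩
            have ht2 : UpChain x (x :: t2') := by
              refine ⟨(List.isChain_cons_cons.mp h2.1).2, rfl, ?_⟩
              obtain ⟨-, -, m, hm, hmax⟩ := h2
              exact ⟨m, by simpa [List.getLast?_cons_cons] using hm, hmax⟩
            have hne' : (x :: t1') ≠ (x :: t2') := fun h => hne (by rw [h])
            obtain ⟨p, q, hp, hq, hpq, hqp⟩ := IH x (x :: t2') ht1 ht2 hne'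
            exact ⟨p, q, hax.lt.trans hp, hax.lt.trans hq, hpq, hqp⟩
          · refine ⟨x, y, hax.lt, hay.lt, ?_, ?_⟩
            · intro h
              exact hay.2 hax.lt (lt_of_le_of_ne h hxy)
            · intro h
              exact hax.2 hay.lt (lt_of_le_of_ne h (Ne.symm hxy))

lemma uc_diverge {v : α} (h : 2 ≤ uc v) :
    ∃ x y, v < x ∧ v < y ∧ ¬ x ≤ y ∧ ¬ y ≤ x := by
  haveI := finite_upChain v
  obtain ⟨⟨l1, h1⟩, ⟨l2, h2⟩, hne⟩ := Finite.one_lt_card_iff_nontrivial.mp h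
  exact upChain_diverge l1 v l2 h1 h2 (fun h' => hne (Subtype.ext h'))

lemma map_comp_id (L : List αᵒᵈ) :
    List.map (⇑OrderDual.toDual ∘ ⇑OrderDual.ofDual) L = L := by
  induction L with
  | nil => rfl
  | cons a t ih => simpa using ih

lemma map_comp_id' (L : List α) :
    List.map (⇑OrderDual.ofDual ∘ ⇑OrderDual.toDual) L = L := by
  induction L with
  | nil => rfl
  | cons a t ih => simpa using ih

lemma downChain_iff {v : α} {l : List α} :
    DownChain v l ↔ UpChain (OrderDual.toDual v) ((l.map OrderDual.toDual).reverse) := by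
  constructor
  · rintro ⟨hc, ⟨m, hm, hmin⟩, hlast⟩
    refine ⟨?_, ?_, OrderDual.toDual m, ?_, hmin.toDual⟩
    · unfold List.Chain'
      rw [List.isChain_reverse, List.isChain_map]
      exact hc.imp fun a b h => toDual_covBy_toDual_iff.mpr h
    · rw [List.head?_reverse, List.getLast?_map, hlast]; rfl
    · rw [List.getLast?_reverse, List.head?_map, hm]; rfl
  · rintro ⟨hc, hh, m, hm, hmax⟩
    unfold List.Chain' at hc
    rw [List.isChain_reverse, List.isChain_map] at hc
    rw [List.head?_reverse, List.getLast?_map] at hh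
    rw [List.getLast?_reverse, List.head?_map] at hm
    refine ⟨hc.imp fun a b h => toDual_covBy_toDual_iff.mp h,
      ⟨OrderDual.ofDual m, ?_, ?_⟩, ?_⟩
    · cases hl : l.head? with
      | none => rw [hl] at hm; simp at hm
      | some a =>
        rw [hl] at hm
        have hm' : OrderDual.toDual a = m := by simpa using hm
        rw [← hm']
        rfl
    · exact isMax_toDual_iff.mp (by simpa using hmax)
    · cases hl : l.getLast? with
      | none => rw [hl] at hh; simp at hh
      | some a =>
        rw [hl] at hh
        have hh' : a = v := by simpa using hh
        rw [hh']

lemma dc_eq_uc (v : α) : dc v = uc (OrderDual.toDual v) := by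
  refine Nat.card_congr ⟨fun l => ⟨(l.1.map OrderDual.toDual).reverse, downChain_iff.mp l.2⟩,
    fun l => ⟨(l.1.reverse.map OrderDual.ofDual), ?_⟩, ?_, ?_⟩
  · rw [downChain_iff]
    convert l.2 using 1
    simp only [List.map_reverse, List.reverse_reverse, List.map_map]
    exact map_comp_id (l.1)
  · intro l; ext1
    simp only [List.map_reverse, List.reverse_reverse, List.map_map]
    exact map_comp_id' (l.1)
  · intro l; ext1
    simp only [List.map_reverse, List.reverse_reverse, List.map_map]
    exact map_comp_id (l.1)

end Aux

theorem hasX_iff_uc_dc (α : Type*) [Fintype α] [PartialOrder α] :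
    HasX α ↔ ∃ v : α, 2 ≤ uc v ∧ 2 ≤ dc v := by
  constructor
  · rintro ⟨c, a, b, d, e, ha, hb, hd, he, hab, hba, hde, hed⟩
    refine ⟨c, two_le_uc hd he hde hed, ?_⟩
    rw [dc_eq_uc]
    exact two_le_uc (α := αᵒᵈ) (by exact ha) (by exact hb)
      (fun h => hba (by exact h)) (fun h => hab (by exact h))
  · rintro ⟨v, hu, hdown⟩
    obtain ⟨d, e, hd, he, hde, hed⟩ := uc_diverge hu
    rw [dc_eq_uc] at hdown
    obtain ⟨x, y, hx, hy, hxy, hyx⟩ := uc_diverge (α := αᵒᵈ) hdown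
    exact ⟨v, OrderDual.ofDual x, OrderDual.ofDual y, d, e,
      (by exact hx), (by exact hy), hd, he,
      fun h => hyx (by exact h), fun h => hxy (by exact h), hde, hed⟩
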